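/- Let 𝔞 be an ideal of a commutative noetherian ring R and f : M → N a homomorphism of R-modules. If the R-modules Hom_R(R/𝔞, M), Ext^1_R(R/𝔞, M) and Hom_R(R/𝔞, N) are artinian, then Hom_R(R/𝔞, ker f) and Ext^1_R(R/𝔞, ker f) are artinian. -/

import Mathlib

/-!
STATEMENT 9: Let 𝔞 be an ideal of a commutative noetherian ring R and f : M → N a
homomorphism of R-modules. If the R-modules Hom_R(R/𝔞, M), Ext^1_R(R/𝔞, M) and
Hom_R(R/𝔞, N) are artinian, then Hom_R(R/𝔞, ker f) and Ext^1_R(R/𝔞, ker f) are artinian.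
-/

open CategoryTheory Opposite

universe u

open Limits HomologicalComplex

namespace ExtKerAux

variable {R : Type u} [CommRing R]

/-- Functoriality of `ChainComplex.linearYonedaObj` in the second variable. -/
noncomputable def lyoMap (X : ChainComplex (ModuleCat.{u} R) ℕ)
    {Y Z : ModuleCat.{u} R} (φ : Y ⟶ Z) :
    X.linearYonedaObj R Y ⟶ X.linearYonedaObj R Z where
  f i := ModuleCat.ofHom (Linear.rightComp R _ φ)
  comm' i j _ := by
    ext g
    show X.d j i ≫ (g ≫ φ) = (X.d j i ≫ g) ≫ φ
    exact (Category.assoc _ _ _).symm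

end ExtKerAux

open ExtKerAux

open ExtKerAux

theorem hom_ext_ker_artinian
    {R : Type u} [CommRing R] [IsNoetherianRing R] (𝔞 : Ideal R)
    {M N : Type u} [AddCommGroup M] [Module R M] [AddCommGroup N] [Module R N]
    (f : M →ₗ[R] N)
    (hM0 : IsArtinian R ((R ⧸ 𝔞) →ₗ[R] M))
    (hM1 : IsArtinian R (((Ext R (ModuleCat.{u} R) 1).obj
      (op (ModuleCat.of R (R ⧸ 𝔞)))).obj (ModuleCat.of R M)))
    (hN0 : IsArtinian R ((R ⧸ 𝔞) →ₗ[R] N)) :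
    IsArtinian R ((R ⧸ 𝔞) →ₗ[R] (LinearMap.ker f)) ∧
    IsArtinian R (((Ext R (ModuleCat.{u} R) 1).obj
      (op (ModuleCat.of R (R ⧸ 𝔞)))).obj (ModuleCat.of R (LinearMap.ker f))) := by
  classical
  set K : Submodule R M := LinearMap.ker f with hK
  -- Part 1 : Hom(R/𝔞, K) is artinian
  haveI := hM0
  have part1 : IsArtinian R ((R ⧸ 𝔞) →ₗ[R] K) := by
    refine isArtinian_of_injective (LinearMap.llcomp R (R ⧸ 𝔞) K M K.subtype) ?_
    intro g g' h
    refine LinearMap.ext fun a => ?_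
    exact Subtype.ext (LinearMap.congr_fun h a)
  -- Setup
  let A := ModuleCat.of R (R ⧸ 𝔞)
  let P : ProjectiveResolution A := ProjectiveResolution.of A
  let Kc := ModuleCat.of R K
  let Mc := ModuleCat.of R M
  let Q := M ⧸ K
  let Qc := ModuleCat.of R Q
  let ι : Kc ⟶ Mc := ModuleCat.ofHom K.subtype
  let p : Mc ⟶ Qc := ModuleCat.ofHom K.mkQ
  have hιp : ι ≫ p = 0 := by
    ext x
    show K.mkQ (K.subtype x) = 0
    exact (Submodule.Quotient.mk_eq_zero K).2 x.2
  let S : ShortComplex (CochainComplex (ModuleCat.{u} R) ℕ) :=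
    ShortComplex.mk (lyoMap P.complex ι) (lyoMap P.complex p) (by
      ext i g
      let g' : P.complex.X i ⟶ Kc := g
      show (g' ≫ ι) ≫ p = 0
      rw [Category.assoc, hιp, Limits.comp_zero])
  have hS : S.ShortExact := by
    apply shortExact_of_degreewise_shortExact
    intro i
    refine { exact := ?_, mono_f := ?_, epi_g := ?_ }
    · rw [ShortComplex.moduleCat_exact_iff]
      intro g hg
      let g' : P.complex.X i ⟶ Mc := g
      have hg2 : g' ≫ p = 0 := hg
      have hg' : ∀ x, K.mkQ (g' x) = 0 := fun x => LinearMap.congr_fun (congrArg ModuleCat.Hom.hom hg2) x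
      have hmem : ∀ x, g' x ∈ K := fun x => by simpa using hg' x
      refine ⟨(ModuleCat.ofHom (LinearMap.codRestrict K g'.hom hmem) : P.complex.X i ⟶ Kc), ?_⟩
      show ModuleCat.ofHom (LinearMap.codRestrict K g'.hom hmem) ≫ ι = g'
      ext x
      rfl
    · rw [ModuleCat.mono_iff_injective]
      show Function.Injective (Linear.rightComp R (P.complex.X i) ι)
      intro g g' h
      ext x
      exact LinearMap.congr_fun (congrArg ModuleCat.Hom.hom h) x
    · rw [ModuleCat.epi_iff_surjective]
      show Function.Surjective (Linear.rightComp R (P.complex.X i) p)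
      intro g
      let g' : P.complex.X i ⟶ Qc := g
      haveI : Epi p := (ModuleCat.epi_iff_surjective p).2 (Submodule.mkQ_surjective K)
      exact ⟨Projective.factorThru g' p, Projective.factorThru_comp g' p⟩
  have hrel : (ComplexShape.up ℕ).Rel 0 1 := rfl
  have hnext : (ComplexShape.up ℕ).next 0 = 1 := (ComplexShape.up ℕ).next_eq' hrel
  -- artinian of H^0 of Hom(P, Q)
  have hart3 : IsArtinian R (S.X₃.homology 0) := by
    haveI hQart : IsArtinian R ((R ⧸ 𝔞) →ₗ[R] Q) := by
      haveI := hN0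
      have e : Q ≃ₗ[R] LinearMap.range f := f.quotKerEquivRange
      refine isArtinian_of_injective
        (LinearMap.llcomp R (R ⧸ 𝔞) Q N ((LinearMap.range f).subtype.comp e.toLinearMap)) ?_
      intro g g' h
      refine LinearMap.ext fun a => ?_
      have h2 := LinearMap.congr_fun h a
      exact e.injective (Subtype.ext h2)
    let sc3 := S.X₃.sc 0
    let π0 : P.complex.X 0 ⟶ A := P.π.f 0
    have hmem : ∀ g : (R ⧸ 𝔞) →ₗ[R] Q, π0 ≫ (ModuleCat.ofHom g : A ⟶ Qc) ∈
        LinearMap.ker sc3.g.hom := by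
      intro g
      show S.X₃.d 0 ((ComplexShape.up ℕ).next 0) (π0 ≫ ModuleCat.ofHom g) = 0
      rw [hnext]
      show P.complex.d 1 0 ≫ P.π.f 0 ≫ ModuleCat.ofHom g = 0
      have := P.complex_d_comp_π_f_zero_assoc (ModuleCat.ofHom g : A ⟶ Qc)
      exact this.trans Limits.zero_comp
    let τ : ((R ⧸ 𝔞) →ₗ[R] Q) →ₗ[R] (LinearMap.ker sc3.g.hom) :=
      LinearMap.codRestrict _ ((Linear.leftComp R Qc π0) ∘ₗ
        (ModuleCat.homLinearEquiv (S := R) (M := A) (N := Qc)).symm.toLinearMap) hmem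
    have hτ : Function.Surjective τ := by
      rintro ⟨x1, hx1⟩
      let x1' : P.complex.X 0 ⟶ Qc := x1
      have h2 : S.X₃.d 0 ((ComplexShape.up ℕ).next 0) x1 = 0 := hx1
      rw [hnext] at h2
      have hx : P.complex.d 1 0 ≫ x1' = 0 := h2
      let h := (P.isColimitCokernelCofork).desc (CokernelCofork.ofπ x1' hx)
      have hfac : P.π.f 0 ≫ h = x1' :=
        Cofork.IsColimit.π_desc P.isColimitCokernelCofork
      exact ⟨h.hom, Subtype.ext hfac⟩
    let σ : ((R ⧸ 𝔞) →ₗ[R] Q) →ₗ[R]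
        (LinearMap.ker sc3.g.hom ⧸ LinearMap.range sc3.moduleCatToCycles) :=
      (Submodule.mkQ _).comp τ
    have hσ : Function.Surjective σ := (Submodule.mkQ_surjective _).comp hτ
    let e2 := (sc3.moduleCatHomologyIso).symm.toLinearEquiv
    exact isArtinian_of_surjective _ (e2.toLinearMap ∘ₗ σ) (e2.surjective.comp hσ)
  -- artinian of H^1 of Hom(P, M)
  have hart2 : IsArtinian R (S.X₂.homology 1) := by
    haveI := hM1
    exact isArtinian_of_linearEquiv (P.isoExt 1 Mc).toLinearEquiv
  -- conclude via the long exact sequence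
  have hex := (hS.homology_exact₁ 0 1 hrel).moduleCat_range_eq_ker
  haveI := hart3
  haveI := hart2
  haveI hart1 : IsArtinian R (S.X₁.homology 1) :=
    isArtinian_of_range_eq_ker (hS.δ 0 1 hrel).hom (HomologicalComplex.homologyMap S.f 1).hom hex
  exact ⟨part1, isArtinian_of_linearEquiv (P.isoExt 1 Kc).symm.toLinearEquiv⟩
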